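/- (Consistency of policy evaluation with the classic value function.) Let V be the unique fixed point of the classic Bellman operator T, and let μ = (π, τ) be any stationary self-triggering policy with zero-penalty evaluation fixed point v^μ (the unique fixed point of (T_μ^0 v)(x) = c̄(x, π(x), τ(x)) + β^{τ(x)} · E_{y∼P̄(x, π(x), τ(x))}[v(y)]). Then V(x) ≤ v^μ(x) for every x ∈ X. -/

import Mathlib

open scoped BigOperators

/-- Expectation of `f` under a probability mass function `p` on a finite type. -/
noncomputable def expect {X : Type*} [Fintype X] (p : PMF X) (f : X → ℝ) : ℝ :=
  ∑ y, (p y).toReal * f y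

/-- The classic Bellman operator `(T v)(x) = min_a ( c(x,a) + β · E_{y∼P(x,a)}[v(y)] )`. -/
noncomputable def bellman {X A : Type*} [Fintype X] [Fintype A]
    (P : X → A → PMF X) (c : X × A → ℝ) (β : ℝ) (v : X → ℝ) : X → ℝ :=
  fun x => ⨅ a : A, (c (x, a) + β * expect (P x a) v)

/-- The skip kernel: distribution of the state after `t` steps from `x`, holding action `a`. -/
noncomputable def skip {X A : Type*} (P : X → A → PMF X) (x : X) (a : A) : ℕ → PMF X
  | 0 => PMF.pure x
  | t + 1 => (skip P x a t).bind fun y => P y a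

/-- The consolidated cost `c̄(x,a,Δt) = ∑_{t=0}^{Δt−1} β^t · E_{y∼P̄(x,a,t)}[c(y,a)]`. -/
noncomputable def cbar {X A : Type*} [Fintype X]
    (P : X → A → PMF X) (c : X × A → ℝ) (β : ℝ) (x : X) (a : A) (Δt : ℕ) : ℝ :=
  ∑ t ∈ Finset.range Δt, β ^ t * expect (skip P x a t) (fun y => c (y, a))

/-- The optimized-lookahead Bellman operator
`(T_O v)(x) = min_{a, 1 ≤ Δt ≤ T̄} ( c̄(x,a,Δt) + β^Δt ( O + E_{y∼P̄(x,a,Δt)}[v(y)] ) )`. -/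
noncomputable def TO {X A : Type*} [Fintype X] [Fintype A]
    (P : X → A → PMF X) (c : X × A → ℝ) (β O : ℝ) (Tb : ℕ) (v : X → ℝ) : X → ℝ :=
  fun x => ⨅ a : A, ⨅ Δt : {n : ℕ // n ∈ Finset.Icc 1 Tb},
    (cbar P c β x a Δt.val + β ^ Δt.val * (O + expect (skip P x a Δt.val) v))

/-- The evaluation operator of a stationary self-triggering policy `μ = (π, τ)`. -/
noncomputable def Tpol {X A : Type*} [Fintype X]
    (P : X → A → PMF X) (c : X × A → ℝ) (β O : ℝ)
    (π : X → A) (τ : X → ℕ) (v : X → ℝ) : X → ℝ :=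
  fun x => cbar P c β x (π x) (τ x) + β ^ (τ x) * (O + expect (skip P x (π x) (τ x)) v)


section Aux

lemma sum_toReal_eq_one {X : Type*} [Fintype X] (p : PMF X) :
    ∑ y, (p y).toReal = 1 := by
  have h := p.tsum_coe
  rw [tsum_fintype] at h
  have h2 : (∑ y, p y).toReal = 1 := by rw [h]; simp
  rw [← h2, ENNReal.toReal_sum]
  intro y _
  exact (p.apply_lt_top y).ne

lemma expect_pure' {X : Type*} [Fintype X] (x : X) (f : X → ℝ) :
    expect (PMF.pure x) f = f x := by
  classical
  simp only [expect, PMF.pure_apply]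
  rw [Finset.sum_eq_single x]
  · simp
  · intro b _ hb; simp [hb]
  · simp

lemma expect_mono' {X : Type*} [Fintype X] (p : PMF X) {f g : X → ℝ}
    (h : ∀ y, f y ≤ g y) : expect p f ≤ expect p g := by
  apply Finset.sum_le_sum
  intro y _
  exact mul_le_mul_of_nonneg_left (h y) ENNReal.toReal_nonneg

lemma expect_le_const' {X : Type*} [Fintype X] (p : PMF X) {f : X → ℝ} {M : ℝ}
    (h : ∀ y, f y ≤ M) : expect p f ≤ M := by
  calc expect p f ≤ ∑ y, (p y).toReal * M :=
        Finset.sum_le_sum fun y _ => mul_le_mul_of_nonneg_left (h y) ENNReal.toReal_nonneg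
    _ = (∑ y, (p y).toReal) * M := by rw [Finset.sum_mul]
    _ = M := by rw [sum_toReal_eq_one]; ring

lemma expect_add' {X : Type*} [Fintype X] (p : PMF X) (f g : X → ℝ) :
    expect p (fun y => f y + g y) = expect p f + expect p g := by
  simp [expect, mul_add, Finset.sum_add_distrib]

lemma expect_smul' {X : Type*} [Fintype X] (p : PMF X) (r : ℝ) (f : X → ℝ) :
    expect p (fun y => r * f y) = r * expect p f := by
  simp only [expect, Finset.mul_sum]
  apply Finset.sum_congr rfl
  intro y _
  ring

lemma expect_sub' {X : Type*} [Fintype X] (p : PMF X) (f g : X → ℝ) :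
    expect p (fun y => f y - g y) = expect p f - expect p g := by
  simp [expect, mul_sub, Finset.sum_sub_distrib]

lemma expect_bind' {X : Type*} [Fintype X] (p : PMF X) (q : X → PMF X) (f : X → ℝ) :
    expect (p.bind q) f = ∑ y, (p y).toReal * expect (q y) f := by
  simp only [expect, PMF.bind_apply]
  have h : ∀ z, (∑' y, p y * q y z).toReal = ∑ y, (p y).toReal * (q y z).toReal := by
    intro z
    rw [tsum_fintype, ENNReal.toReal_sum (fun y _ =>
      ENNReal.mul_ne_top (p.apply_lt_top y).ne ((q y).apply_lt_top z).ne)]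
    simp [ENNReal.toReal_mul]
  simp_rw [h, Finset.sum_mul]
  rw [Finset.sum_comm]
  apply Finset.sum_congr rfl
  intro y _
  rw [Finset.mul_sum]
  apply Finset.sum_congr rfl
  intro z _
  ring

end Aux

theorem classic_value_le_policy_value {X A : Type*} [Fintype X] [Nonempty X] [Fintype A] [Nonempty A]
    (P : X → A → PMF X) (c : X × A → ℝ) (hc : ∀ (x : X) (a : A), 0 ≤ c (x, a))
    (β : ℝ) (hβ0 : 0 ≤ β) (hβ1 : β < 1)
    (Tb : ℕ) (hTb : 1 ≤ Tb)
    (V : X → ℝ) (hV : bellman P c β V = V)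
    (π : X → A) (τ : X → ℕ) (hτ : ∀ x : X, 1 ≤ τ x ∧ τ x ≤ Tb)
    (vμ : X → ℝ) (hvμ : Tpol P c β 0 π τ vμ = vμ) :
    ∀ x : X, V x ≤ vμ x := by
  -- Step 1: one-step Bellman inequality
  have hstep : ∀ (x : X) (a : A), V x ≤ c (x, a) + β * expect (P x a) V := by
    intro x a
    have : bellman P c β V x ≤ c (x, a) + β * expect (P x a) V :=
      ciInf_le (Finite.bddBelow_range _) a
    rwa [hV] at this
  -- Step 2: multi-step lookahead inequality
  have hmulti : ∀ (x : X) (a : A) (n : ℕ),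
      V x ≤ cbar P c β x a n + β ^ n * expect (skip P x a n) V := by
    intro x a n
    induction n with
    | zero => simp [cbar, skip, expect_pure']
    | succ n ih =>
      have hle : expect (skip P x a n) V ≤
          expect (skip P x a n) (fun y => c (y, a) + β * expect (P y a) V) :=
        expect_mono' _ (fun y => hstep y a)
      have hb : expect (skip P x a (n + 1)) V =
          expect (skip P x a n) (fun y => expect (P y a) V) := by
        show expect ((skip P x a n).bind fun y => P y a) V = _
        rw [expect_bind' _ _ _]
        rfl
      have hpow : (0:ℝ) ≤ β ^ n := pow_nonneg hβ0 n
      calc V x ≤ cbar P c β x a n + β ^ n * expect (skip P x a n) V := ih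
        _ ≤ cbar P c β x a n + β ^ n *
            expect (skip P x a n) (fun y => c (y, a) + β * expect (P y a) V) := by
            exact add_le_add_right (mul_le_mul_of_nonneg_left hle hpow) _
        _ = cbar P c β x a (n + 1) + β ^ (n + 1) * expect (skip P x a (n + 1)) V := by
            rw [hb, expect_add' _ (fun y => c (y, a)) (fun y => β * expect (P y a) V),
              expect_smul']
            simp only [cbar, Finset.sum_range_succ]
            ring
  -- Step 3: V ≤ Tpol V pointwise
  have hVT : ∀ x : X, V x ≤ Tpol P c β 0 π τ V x := by
    intro x
    have := hmulti x (π x) (τ x)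
    simpa [Tpol] using this
  -- Step 4: contraction argument
  classical
  obtain ⟨x₀, -, hx₀⟩ := Finset.exists_max_image (Finset.univ : Finset X)
    (fun x => V x - vμ x) ⟨Classical.arbitrary X, Finset.mem_univ _⟩
  have hmax : ∀ x, V x - vμ x ≤ V x₀ - vμ x₀ := fun x => hx₀ x (Finset.mem_univ x)
  suffices hM : V x₀ - vμ x₀ ≤ 0 by
    intro x
    have := hmax x
    linarith
  by_contra hM
  push_neg at hM
  set M := V x₀ - vμ x₀ with hMdef
  have hkey : M ≤ β ^ (τ x₀) * M := by
    have h1 : V x₀ ≤ Tpol P c β 0 π τ V x₀ := hVT x₀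
    have h2 : vμ x₀ = Tpol P c β 0 π τ vμ x₀ := by rw [hvμ]
    have h3 : Tpol P c β 0 π τ V x₀ - Tpol P c β 0 π τ vμ x₀ =
        β ^ (τ x₀) * (expect (skip P x₀ (π x₀) (τ x₀)) V -
          expect (skip P x₀ (π x₀) (τ x₀)) vμ) := by
      simp only [Tpol]
      ring
    have h4 : expect (skip P x₀ (π x₀) (τ x₀)) V -
        expect (skip P x₀ (π x₀) (τ x₀)) vμ ≤ M := by
      rw [← expect_sub']
      exact expect_le_const' _ hmax
    have h5 : β ^ (τ x₀) * (expect (skip P x₀ (π x₀) (τ x₀)) V -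
        expect (skip P x₀ (π x₀) (τ x₀)) vμ) ≤ β ^ (τ x₀) * M :=
      mul_le_mul_of_nonneg_left h4 (pow_nonneg hβ0 _)
    calc M = V x₀ - vμ x₀ := rfl
      _ ≤ Tpol P c β 0 π τ V x₀ - Tpol P c β 0 π τ vμ x₀ := by rw [← h2] at *; linarith
      _ ≤ β ^ (τ x₀) * M := by rw [h3] at *; exact h5
  have hβτ : β ^ (τ x₀) ≤ β := by
    calc β ^ (τ x₀) ≤ β ^ 1 := pow_le_pow_of_le_one hβ0 hβ1.le (hτ x₀).1
      _ = β := pow_one β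
  have : β ^ (τ x₀) * M ≤ β * M := mul_le_mul_of_nonneg_right hβτ hM.le
  nlinarith
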